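/- Fix a matrix W ∈ ℝ^{N×N}, a scalar θ ∈ ℝ, integers B ≥ 1 and S ≥ 2, and vectors y_s(u) ∈ ℝ^n for s ∈ {1,…,S−1}, u ∈ {1,…,N}. Define y_s^{−1}(u) = y_s^0(u) = y_s(u) and, for n ≥ 0, y_s^{n+1}(u) = (1+θ)·Σ_{v=1}^N W(u,v)·y_s^n(v) − θ·y_s^{n−1}(u). Define z_1^{−1}(u) = z_1^0(u) = 0 and, for each s: z_s^{k+1}(u) = (1+θ)·Σ_{v=1}^N W(u,v)·z_s^k(v) − θ·z_s^{k−1}(u) for k = 0,…,B−1, and z_{s+1}^{−1}(u) = z_s^{B−1}(u) + y_s(u), z_{s+1}^0(u) = z_s^B(u) + y_s(u). Then for every s ∈ {1,…,S}, every u ∈ {1,…,N}, and every k ∈ {1,…,B}: z_s^k(u) = Σ_{l=1}^{s−1} y_l^{(s−l−1)B + k}(u). -/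

import Mathlib

open Finset

/-- closed form of the block gossip iterates `z_s^k` in terms of
the gossip-propagated increments `y_l^n`. -/
theorem stmt_10 (n N B S : ℕ) (hB : 1 ≤ B) (hS : 2 ≤ S)
    (W : Matrix (Fin N) (Fin N) ℝ) (θ : ℝ)
    (y : ℕ → Fin N → EuclideanSpace ℝ (Fin n))
    (yIter : ℕ → ℤ → Fin N → EuclideanSpace ℝ (Fin n))
    (hyInit : ∀ s ∈ Finset.Icc 1 (S - 1), ∀ u,
      yIter s (-1) u = y s u ∧ yIter s 0 u = y s u)
    (hyRec : ∀ s ∈ Finset.Icc 1 (S - 1), ∀ m : ℤ, 0 ≤ m → ∀ u,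
      yIter s (m + 1) u = (1 + θ) • (∑ v, W u v • yIter s m v) - θ • yIter s (m - 1) u)
    (z : ℕ → ℤ → Fin N → EuclideanSpace ℝ (Fin n))
    (hz1 : ∀ u, z 1 (-1) u = 0 ∧ z 1 0 u = 0)
    (hzRec : ∀ s ∈ Finset.Icc 1 S, ∀ k ∈ Finset.Ico (0 : ℤ) (B : ℤ), ∀ u,
      z s (k + 1) u = (1 + θ) • (∑ v, W u v • z s k v) - θ • z s (k - 1) u)
    (hzNext : ∀ s ∈ Finset.Icc 1 (S - 1), ∀ u,
      z (s + 1) (-1) u = z s ((B : ℤ) - 1) u + y s u ∧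
        z (s + 1) 0 u = z s (B : ℤ) u + y s u) :
    ∀ s ∈ Finset.Icc 1 S, ∀ u, ∀ k ∈ Finset.Icc 1 B,
      z s (k : ℤ) u =
        ∑ l ∈ Finset.Icc 1 (s - 1), yIter l (((s - l - 1) * B + k : ℕ) : ℤ) u := by
  have key : ∀ s, 1 ≤ s → s ≤ S → ∀ m : ℕ, m ≤ B → ∀ u,
      z s ((m : ℤ) - 1) u
          = ∑ l ∈ Finset.Icc 1 (s - 1), yIter l ((((s - 1 - l) * B : ℕ) : ℤ) + (m : ℤ) - 1) u ∧
      z s (m : ℤ) u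
          = ∑ l ∈ Finset.Icc 1 (s - 1), yIter l ((((s - 1 - l) * B : ℕ) : ℤ) + (m : ℤ)) u := by
    intro s hs1
    induction s, hs1 using Nat.le_induction with
    | base =>
      intro _ m hm
      simp only [Nat.sub_self, show Finset.Icc 1 0 = (∅ : Finset ℕ) from rfl,
        Finset.sum_empty]
      induction m with
      | zero => intro u; simpa using hz1 u
      | succ m ih =>
        have ih' := ih (by omega)
        intro u
        have hrec := hzRec 1 (by simp [Finset.mem_Icc]; omega) (m : ℤ)
          (by simp [Finset.mem_Ico]; omega) u
        constructor
        · have h : ((m : ℤ) + 1) - 1 = (m : ℤ) := by ring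
          push_cast
          rw [h]
          exact (ih' u).2
        · push_cast
          rw [hrec]
          have h2 : z 1 ((m : ℤ) - 1) u = 0 := (ih' u).1
          have h3 : ∀ v, z 1 ((m : ℤ)) v = 0 := fun v => (ih' v).2
          simp [h2, h3]
    | succ s hs ih =>
      intro hsS
      have hsS' : s ≤ S := by omega
      have hsS1 : s ∈ Finset.Icc 1 (S - 1) := by simp [Finset.mem_Icc]; omega
      have hsS1' : s + 1 ∈ Finset.Icc 1 S := by simp [Finset.mem_Icc]; omega
      have ih' := ih hsS'
      -- index rewriting helper : for l ≤ s - 1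
      have hidx : ∀ l, l ≤ s - 1 → ∀ m' : ℤ,
          (((s + 1 - 1 - l) * B : ℕ) : ℤ) + m'
            = (((s - 1 - l) * B : ℕ) : ℤ) + (B : ℤ) + m' := by
        intro l hl m'
        have h1 : (s + 1 - 1 - l) = (s - 1 - l) + 1 := by omega
        rw [h1, Nat.succ_mul]
        push_cast
        ring
      -- base case m = 0 for s+1
      have base0 : ∀ u,
          z (s + 1) ((0 : ℤ) - 1) u
              = ∑ l ∈ Finset.Icc 1 (s + 1 - 1),
                  yIter l ((((s + 1 - 1 - l) * B : ℕ) : ℤ) + (0 : ℤ) - 1) u ∧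
          z (s + 1) (0 : ℤ) u
              = ∑ l ∈ Finset.Icc 1 (s + 1 - 1),
                  yIter l ((((s + 1 - 1 - l) * B : ℕ) : ℤ) + (0 : ℤ)) u := by
        intro u
        have hnext := hzNext s hsS1 u
        have hIB := ih' B le_rfl u
        have hsplit : ∀ f : ℕ → EuclideanSpace ℝ (Fin n),
            ∑ l ∈ Finset.Icc 1 (s + 1 - 1), f l
              = (∑ l ∈ Finset.Icc 1 (s - 1), f l) + f s := by
          intro f
          have e : s - 1 + 1 = s := by omega
          calc ∑ l ∈ Finset.Icc 1 (s + 1 - 1), f l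
              = ∑ l ∈ Finset.Icc 1 (s - 1 + 1), f l := by
                rw [show s + 1 - 1 = s - 1 + 1 from by omega]
            _ = (∑ l ∈ Finset.Icc 1 (s - 1), f l) + f (s - 1 + 1) :=
                Finset.sum_Icc_succ_top (by omega) f
            _ = _ := by rw [e]
        have hyI := hyInit s hsS1 u
        constructor
        · rw [show (0 : ℤ) - 1 = -1 by ring, hnext.1, hsplit]
          congr 1
          · rw [hIB.1]
            apply Finset.sum_congr rfl
            intro l hl
            rw [hidx l (Finset.mem_Icc.mp hl).2]
            ring_nf
          · rw [show (((s + 1 - 1 - s) * B : ℕ) : ℤ) + (0 : ℤ) - 1 = -1 by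
              simp [Nat.sub_self]]
            exact hyI.1.symm
        · rw [hnext.2, hsplit]
          congr 1
          · rw [hIB.2]
            apply Finset.sum_congr rfl
            intro l hl
            rw [hidx l (Finset.mem_Icc.mp hl).2]
            ring_nf
          · rw [show (((s + 1 - 1 - s) * B : ℕ) : ℤ) + (0 : ℤ) = 0 by
              simp [Nat.sub_self]]
            exact hyI.2.symm
      -- now induction on m for s+1
      intro m hm
      induction m with
      | zero => intro u; simpa using base0 u
      | succ m ihm =>
        have ihm' := ihm (by omega)
        intro u
        have hrec := hzRec (s + 1) hsS1' (m : ℤ)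
          (by simp [Finset.mem_Ico]; omega) u
        constructor
        · rw [show (((m + 1 : ℕ) : ℤ)) - 1 = (m : ℤ) from by push_cast; ring]
          rw [(ihm' u).2]
          apply Finset.sum_congr rfl
          intro l hl
          have hix : ((((s + 1 - 1 - l) * B : ℕ) : ℤ) + ((m + 1 : ℕ) : ℤ)) - 1
              = (((s + 1 - 1 - l) * B : ℕ) : ℤ) + (m : ℤ) := by push_cast; ring
          rw [hix]
        · rw [show (((m + 1 : ℕ) : ℤ)) = (m : ℤ) + 1 from by push_cast; ring]
          rw [hrec, (ihm' u).1]
          have h3 : ∀ v, z (s + 1) ((m : ℤ)) v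
              = ∑ l ∈ Finset.Icc 1 (s + 1 - 1),
                  yIter l ((((s + 1 - 1 - l) * B : ℕ) : ℤ) + (m : ℤ)) v :=
            fun v => (ihm' v).2
          simp only [h3]
          have hexp : ∀ l ∈ Finset.Icc 1 (s + 1 - 1),
              yIter l ((((s + 1 - 1 - l) * B : ℕ) : ℤ) + ((m : ℤ) + 1)) u
                = (1 + θ) • (∑ v, W u v •
                      yIter l ((((s + 1 - 1 - l) * B : ℕ) : ℤ) + (m : ℤ)) v)
                  - θ • yIter l ((((s + 1 - 1 - l) * B : ℕ) : ℤ) + (m : ℤ) - 1) u := by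
            intro l hl
            have hlS : l ∈ Finset.Icc 1 (S - 1) := by
              simp only [Finset.mem_Icc] at hl ⊢; omega
            have h := hyRec l hlS ((((s + 1 - 1 - l) * B : ℕ) : ℤ) + (m : ℤ))
              (by positivity) u
            rw [show (((s + 1 - 1 - l) * B : ℕ) : ℤ) + ((m : ℤ) + 1)
                = ((((s + 1 - 1 - l) * B : ℕ) : ℤ) + (m : ℤ)) + 1 from by ring]
            exact h
          rw [Finset.sum_congr rfl hexp, Finset.sum_sub_distrib,
            ← Finset.smul_sum, ← Finset.smul_sum]
          congr 1
          congr 1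
          simp_rw [Finset.smul_sum]
          rw [Finset.sum_comm]
  -- conclude
  intro s hsmem u k hk
  obtain ⟨hs1, hsS⟩ := Finset.mem_Icc.mp hsmem
  obtain ⟨hk1, hkB⟩ := Finset.mem_Icc.mp hk
  have := (key s hs1 hsS k hkB u).2
  rw [this]
  apply Finset.sum_congr rfl
  intro l hl
  have h1 : (s - l - 1) * B + k = (s - 1 - l) * B + k := by
    rw [show s - l - 1 = s - 1 - l from by omega]
  rw [h1]
  push_cast
  ring_nf
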